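/- arXiv:math/9206201 — 2 statements merged into one kernel-verified Lean document; each statement's English description precedes it below -/
import Mathlib

section
/- Let X = Σ_{n=1}^N εₙ xₙ be a finite Rademacher series in a Banach space E. For every t > 0, P(‖X‖ > 2·E‖X‖ + 3·K((xₙ)_{n=1}^N, t; ℓ₁^w(E), ℓ₂^w(E))) ≤ 4·e^{−t²/8}. -/
open MeasureTheory ProbabilityTheory

/-- The weak-`ℓ₁` norm of a finite sequence: `ℓ₁^w((xₙ)) = sup_{‖x*‖≤1} ∑ |x*(xₙ)|`. -/
noncomputable def l1wFin {E : Type*} [NormedAddCommGroup E] [NormedSpace ℝ E]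
    {N : ℕ} (y : Fin N → E) : ℝ :=
  ⨆ f : {f : E →L[ℝ] ℝ // ‖f‖ ≤ 1}, ∑ n, |f.1 (y n)|

/-- The weak-`ℓ₂` norm of a finite sequence:
`ℓ₂^w((xₙ)) = sup_{‖x*‖≤1} (∑ |x*(xₙ)|²)^{1/2}`. -/
noncomputable def l2wFin {E : Type*} [NormedAddCommGroup E] [NormedSpace ℝ E]
    {N : ℕ} (z : Fin N → E) : ℝ :=
  ⨆ f : {f : E →L[ℝ] ℝ // ‖f‖ ≤ 1}, (∑ n, (f.1 (z n)) ^ 2) ^ ((1 : ℝ) / 2)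

/-- The K-functional of the couple `(ℓ₁^w(E), ℓ₂^w(E))` for a finite sequence. -/
noncomputable def KwCouple {E : Type*} [NormedAddCommGroup E] [NormedSpace ℝ E]
    {N : ℕ} (x : Fin N → E) (t : ℝ) : ℝ :=
  sInf {r : ℝ | ∃ y z : Fin N → E, (∀ n, x n = y n + z n) ∧
    r = l1wFin y + t * l2wFin z}

/-- `(εₙ)` is a (finite) Rademacher sequence. -/
def IsRademacherFin {Ω : Type*} [MeasurableSpace Ω] (μ : Measure Ω) {N : ℕ}
    (ε : Fin N → Ω → ℝ) : Prop :=
  (∀ n, Measurable (ε n)) ∧ iIndepFun ε μ ∧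
    ∀ n, μ {ω | ε n ω = 1} = 1 / 2 ∧ μ {ω | ε n ω = -1} = 1 / 2


noncomputable section

namespace CubeTal

def chi (b : Bool) : ℝ := if b then 1 else -1

lemma chi_sq_sub (b c : Bool) : (chi b - chi c)^2 = if b = c then 0 else 4 := by
  cases b <;> cases c <;> norm_num [chi]

def IsWeight {n : ℕ} (A : Finset (Fin n → Bool)) (w : (Fin n → Bool) → ℝ) : Prop :=
  (∀ v, 0 ≤ w v) ∧ (∀ v, v ∉ A → w v = 0) ∧ (∑ v, w v) = 1

def ctr {n : ℕ} (w : (Fin n → Bool) → ℝ) (i : Fin n) : ℝ := ∑ v, w v * chi (v i)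

def d2 {n : ℕ} (w : (Fin n → Bool) → ℝ) (x : Fin n → Bool) : ℝ :=
  ∑ i, (chi (x i) - ctr w i) ^ 2

def D2 {n : ℕ} (A : Finset (Fin n → Bool)) (x : Fin n → Bool) : ℝ :=
  sInf {r | ∃ w, IsWeight A w ∧ r = d2 w x}

lemma d2_nonneg {n : ℕ} (w : (Fin n → Bool) → ℝ) (x : Fin n → Bool) : 0 ≤ d2 w x :=
  Finset.sum_nonneg fun _ _ => sq_nonneg _

lemma isWeight_pointMass {n : ℕ} {A : Finset (Fin n → Bool)} {a : Fin n → Bool} (ha : a ∈ A) :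
    IsWeight A (fun v => if v = a then 1 else 0) := by
  refine ⟨fun v => by positivity, fun v hv => ?_, by simp⟩
  simp only [ite_eq_right_iff, one_ne_zero]
  rintro rfl; exact absurd ha hv

lemma D2_set_nonempty {n : ℕ} {A : Finset (Fin n → Bool)} (hA : A.Nonempty) (x : Fin n → Bool) :
    {r | ∃ w, IsWeight A w ∧ r = d2 w x}.Nonempty := by
  obtain ⟨a, ha⟩ := hA
  exact ⟨_, _, isWeight_pointMass ha, rfl⟩

lemma D2_set_bddBelow {n : ℕ} (A : Finset (Fin n → Bool)) (x : Fin n → Bool) :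
    BddBelow {r | ∃ w, IsWeight A w ∧ r = d2 w x} := by
  refine ⟨0, fun r hr => ?_⟩
  obtain ⟨w, -, rfl⟩ := hr
  exact d2_nonneg w x

lemma D2_nonneg {n : ℕ} {A : Finset (Fin n → Bool)} (hA : A.Nonempty) (x : Fin n → Bool) :
    0 ≤ D2 A x :=
  le_csInf (D2_set_nonempty hA x) (fun r hr => by obtain ⟨w, -, rfl⟩ := hr; exact d2_nonneg w x)

lemma D2_le_d2 {n : ℕ} {A : Finset (Fin n → Bool)} {w : (Fin n → Bool) → ℝ}
    (hw : IsWeight A w) (x : Fin n → Bool) : D2 A x ≤ d2 w x :=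
  csInf_le (D2_set_bddBelow A x) ⟨w, hw, rfl⟩

lemma exists_weight_lt {n : ℕ} {A : Finset (Fin n → Bool)} (hA : A.Nonempty)
    (x : Fin n → Bool) {δ : ℝ} (hδ : 0 < δ) :
    ∃ w, IsWeight A w ∧ d2 w x < D2 A x + δ := by
  obtain ⟨r, ⟨w, hw, rfl⟩, hr⟩ := Real.lt_sInf_add_pos (D2_set_nonempty hA x) hδ
  exact ⟨w, hw, hr⟩

lemma cube_sum {n : ℕ} {M : Type*} [AddCommMonoid M] (g : (Fin (n+1) → Bool) → M) :
    ∑ u, g u = (∑ v, g (Fin.cons true v)) + ∑ v, g (Fin.cons false v) := by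
  rw [← Equiv.sum_comp (Fin.consEquiv (fun _ => Bool)) g, Fintype.sum_prod_type,
    Fintype.sum_bool]
  rfl

def sec {n : ℕ} (A : Finset (Fin (n+1) → Bool)) (b : Bool) : Finset (Fin n → Bool) :=
  Finset.univ.filter (fun v => Fin.cons b v ∈ A)

lemma mem_sec {n : ℕ} {A : Finset (Fin (n+1) → Bool)} {b : Bool} {v : Fin n → Bool} :
    v ∈ sec A b ↔ Fin.cons b v ∈ A := by simp [sec]

lemma card_split {n : ℕ} (A : Finset (Fin (n+1) → Bool)) :
    A.card = (sec A true).card + (sec A false).card := by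
  have h : ∀ (B : Finset (Fin n → Bool)), B.card = ∑ v : Fin n → Bool, if v ∈ B then 1 else 0 := by
    intro B
    rw [Finset.card_eq_sum_ones]
    rw [Finset.sum_ite_mem, Finset.univ_inter]
  have hA : A.card = ∑ u : Fin (n+1) → Bool, if u ∈ A then 1 else 0 := by
    rw [Finset.card_eq_sum_ones, Finset.sum_ite_mem, Finset.univ_inter]
  rw [hA, cube_sum (fun u => if u ∈ A then (1:ℕ) else 0), h (sec A true), h (sec A false)]
  simp [mem_sec]

end CubeTal

namespace CubeTal

def lift {n : ℕ} (b : Bool) (w : (Fin n → Bool) → ℝ) : (Fin (n+1) → Bool) → ℝ :=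
  fun u => if u 0 = b then w (Fin.tail u) else 0

lemma lift_cons {n : ℕ} (b c : Bool) (w : (Fin n → Bool) → ℝ) (v : Fin n → Bool) :
    lift b w (Fin.cons c v) = if c = b then w v else 0 := by
  simp [lift, Fin.cons_zero, Fin.tail_cons]

lemma isWeight_lift {n : ℕ} {A : Finset (Fin (n+1) → Bool)} {b : Bool}
    {w : (Fin n → Bool) → ℝ} (hw : IsWeight (sec A b) w) : IsWeight A (lift b w) := by
  obtain ⟨h0, hsupp, hsum⟩ := hw
  refine ⟨fun u => ?_, fun u hu => ?_, ?_⟩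
  · unfold lift
    split
    · exact h0 _
    · exact le_rfl
  · unfold lift
    split
    · rename_i h
      apply hsupp
      rw [mem_sec, ← h, Fin.cons_self_tail]
      exact hu
    · rfl
  · rw [cube_sum (lift b w)]
    simp only [lift_cons]
    cases b <;> simp [hsum]

lemma ctr_lift_zero {n : ℕ} (b : Bool) {w : (Fin n → Bool) → ℝ}
    (hsum : (∑ v, w v) = 1) : ctr (lift b w) 0 = chi b := by
  unfold ctr
  rw [cube_sum (fun u => lift b w u * chi (u 0))]
  simp only [lift_cons, Fin.cons_zero]
  cases b <;> simp [← Finset.sum_mul, hsum]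

lemma ctr_lift_succ {n : ℕ} (b : Bool) (w : (Fin n → Bool) → ℝ) (i : Fin n) :
    ctr (lift b w) i.succ = ctr w i := by
  unfold ctr
  rw [cube_sum (fun u => lift b w u * chi (u i.succ))]
  simp only [lift_cons, Fin.cons_succ]
  cases b <;> simp

lemma isWeight_comb {n : ℕ} {A : Finset (Fin n → Bool)} {w₁ w₂ : (Fin n → Bool) → ℝ}
    (h₁ : IsWeight A w₁) (h₂ : IsWeight A w₂) {l : ℝ} (h0 : 0 ≤ l) (h1 : l ≤ 1) :
    IsWeight A (fun v => l * w₁ v + (1 - l) * w₂ v) := by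
  refine ⟨fun v => ?_, fun v hv => ?_, ?_⟩
  · dsimp only
    nlinarith [h₁.1 v, h₂.1 v]
  · dsimp only
    rw [h₁.2.1 v hv, h₂.2.1 v hv]; ring
  · dsimp only
    rw [Finset.sum_add_distrib, ← Finset.mul_sum, ← Finset.mul_sum, h₁.2.2, h₂.2.2]; ring

lemma ctr_comb {n : ℕ} (w₁ w₂ : (Fin n → Bool) → ℝ) (l : ℝ) (i : Fin n) :
    ctr (fun v => l * w₁ v + (1 - l) * w₂ v) i = l * ctr w₁ i + (1 - l) * ctr w₂ i := by
  have h : ∀ v : Fin n → Bool, (l * w₁ v + (1 - l) * w₂ v) * chi (v i)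
      = l * (w₁ v * chi (v i)) + (1-l) * (w₂ v * chi (v i)) := fun v => by ring
  simp only [ctr, h, Finset.sum_add_distrib, ← Finset.mul_sum]

/-- Same-side / flip-side basic bound. -/
lemma D2_cons_le {n : ℕ} {A : Finset (Fin (n+1) → Bool)} {b : Bool}
    (hb : (sec A b).Nonempty) (c : Bool) (x : Fin n → Bool) :
    D2 A (Fin.cons c x) ≤ (chi c - chi b)^2 + D2 (sec A b) x := by
  refine le_of_forall_pos_le_add (fun δ hδ => ?_)
  obtain ⟨w, hw, hlt⟩ := exists_weight_lt hb x hδ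
  calc D2 A (Fin.cons c x) ≤ d2 (lift b w) (Fin.cons c x) := D2_le_d2 (isWeight_lift hw) _
    _ = (chi c - chi b)^2 + d2 w x := by
        unfold d2
        rw [Fin.sum_univ_succ]
        congr 1
        · rw [ctr_lift_zero b hw.2.2, Fin.cons_zero]
        · refine Finset.sum_congr rfl (fun i _ => ?_)
          rw [ctr_lift_succ, Fin.cons_succ]
    _ ≤ (chi c - chi b)^2 + D2 (sec A b) x + δ := by linarith

lemma D2_cons_comb {n : ℕ} {A : Finset (Fin (n+1) → Bool)} {b : Bool}
    (hb : (sec A b).Nonempty) (hb' : (sec A (!b)).Nonempty) {l : ℝ}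
    (h0 : 0 ≤ l) (h1 : l ≤ 1) (x : Fin n → Bool) :
    D2 A (Fin.cons b x) ≤ l * D2 (sec A b) x + (1-l) * D2 (sec A (!b)) x + 4*(1-l)^2 := by
  have h1' : (0:ℝ) ≤ 1 - l := by linarith
  refine le_of_forall_pos_le_add (fun δ hδ => ?_)
  have hδ2 : 0 < δ/2 := by linarith
  obtain ⟨w₁, hw₁, hlt₁⟩ := exists_weight_lt hb x hδ2
  obtain ⟨w₂, hw₂, hlt₂⟩ := exists_weight_lt hb' x hδ2
  have hW : IsWeight A (fun u => l * lift b w₁ u + (1-l) * lift (!b) w₂ u) :=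
    isWeight_comb (isWeight_lift hw₁) (isWeight_lift hw₂) h0 h1
  have key : d2 (fun u => l * lift b w₁ u + (1-l) * lift (!b) w₂ u) (Fin.cons b x)
      ≤ 4*(1-l)^2 + (l * d2 w₁ x + (1-l) * d2 w₂ x) := by
    unfold d2
    rw [Fin.sum_univ_succ]
    have hz : ctr (fun u => l * lift b w₁ u + (1-l) * lift (!b) w₂ u) 0
        = l * chi b + (1-l) * chi (!b) := by
      rw [ctr_comb, ctr_lift_zero b hw₁.2.2, ctr_lift_zero (!b) hw₂.2.2]
    have h4 : (chi b - chi (!b))^2 = 4 := by cases b <;> norm_num [chi]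
    have hterm0 : (chi (Fin.cons (α := fun _ => Bool) b x 0) -
        ctr (fun u => l * lift b w₁ u + (1-l) * lift (!b) w₂ u) 0)^2 = 4*(1-l)^2 := by
      rw [hz, Fin.cons_zero]
      nlinarith [h4]
    rw [hterm0]
    gcongr
    calc ∑ i : Fin n, (chi (Fin.cons (α := fun _ => Bool) b x i.succ) -
          ctr (fun u => l * lift b w₁ u + (1-l) * lift (!b) w₂ u) i.succ)^2
        ≤ ∑ i : Fin n, (l * (chi (x i) - ctr w₁ i)^2 + (1-l) * (chi (x i) - ctr w₂ i)^2) := by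
          refine Finset.sum_le_sum (fun i _ => ?_)
          rw [ctr_comb, ctr_lift_succ, ctr_lift_succ, Fin.cons_succ]
          nlinarith [sq_nonneg ((chi (x i) - ctr w₁ i) - (chi (x i) - ctr w₂ i)),
            mul_nonneg h0 h1']
      _ = l * d2 w₁ x + (1-l) * d2 w₂ x := by
          rw [Finset.sum_add_distrib, ← Finset.mul_sum, ← Finset.mul_sum]; rfl
  have := D2_le_d2 hW (Fin.cons b x)
  nlinarith [mul_le_mul_of_nonneg_left hlt₁.le h0, mul_le_mul_of_nonneg_left hlt₂.le h1']

end CubeTal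

namespace CubeTal

lemma side_le {n : ℕ} {A : Finset (Fin (n+1) → Bool)} {b : Bool}
    (hb : (sec A b).Nonempty) (c : Bool) :
    ∑ x : Fin n → Bool, Real.exp (D2 A (Fin.cons c x) / 72)
      ≤ Real.exp ((chi c - chi b)^2 / 72) * ∑ x, Real.exp (D2 (sec A b) x / 72) := by
  rw [Finset.mul_sum]
  refine Finset.sum_le_sum (fun x _ => ?_)
  rw [← Real.exp_add, ← add_div]
  exact Real.exp_le_exp.2 (div_le_div_of_nonneg_right (D2_cons_le hb c x) (by norm_num))

lemma exp_const_bound : Real.exp ((4:ℝ)/72) ≤ 3 := by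
  calc Real.exp ((4:ℝ)/72) ≤ Real.exp 1 := Real.exp_le_exp.2 (by norm_num)
    _ ≤ 3 := by have := Real.exp_one_lt_d9; linarith

lemma numeric_key {u : ℝ} (hu0 : 0 ≤ u) (hu1 : u ≤ 1) :
    (1 + Real.exp (u^2/18) * (1+u)) * (2-u) ≤ 4 := by
  set E : ℝ := Real.exp (u^2/18) with hE
  have hE0 : 0 < E := Real.exp_pos _
  have h1 : -(u^2/18) + 1 ≤ Real.exp (-(u^2/18)) := Real.add_one_le_exp _
  have h2 : Real.exp (-(u^2/18)) * E = 1 := by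
    rw [hE, ← Real.exp_add]; simp
  have h18 : E * (18 - u^2) ≤ 18 := by nlinarith
  nlinarith [mul_le_mul_of_nonneg_left h18
      (show (0:ℝ) ≤ (1+u)*(2-u) by nlinarith), sq_nonneg u, mul_nonneg hu0 (sq_nonneg u)]

lemma step_both {n : ℕ} {A : Finset (Fin (n+1) → Bool)} {b : Bool}
    (hb : (sec A b).Nonempty) (hb' : (sec A (!b)).Nonempty)
    (hcard : (sec A b).card ≤ (sec A (!b)).card)
    (IHb : (∑ x, Real.exp (D2 (sec A b) x / 72)) ≤ 4^n / ((sec A b).card : ℝ))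
    (IHb' : (∑ x, Real.exp (D2 (sec A (!b)) x / 72)) ≤ 4^n / ((sec A (!b)).card : ℝ)) :
    (∑ x : Fin n → Bool, Real.exp (D2 A (Fin.cons b x) / 72))
      + (∑ x : Fin n → Bool, Real.exp (D2 A (Fin.cons (!b) x) / 72))
      ≤ 4^(n+1) / (((sec A b).card : ℝ) + ((sec A (!b)).card : ℝ)) := by
  set α : ℝ := ((sec A b).card : ℝ) with hα
  set γ : ℝ := ((sec A (!b)).card : ℝ) with hγ
  have hα0 : 0 < α := by rw [hα]; exact_mod_cast Finset.card_pos.2 hb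
  have hγ0 : 0 < γ := by rw [hγ]; exact_mod_cast Finset.card_pos.2 hb'
  have hαγ : α ≤ γ := by rw [hα, hγ]; exact_mod_cast hcard
  set l : ℝ := α / γ with hl
  have hl0 : 0 ≤ l := by positivity
  have hl1 : l ≤ 1 := by rw [hl, div_le_one hγ0]; exact hαγ
  set u : ℝ := 1 - l with hu
  have hu0 : 0 ≤ u := by rw [hu]; linarith
  have hu1 : u ≤ 1 := by rw [hu]; linarith
  set E : ℝ := Real.exp (u^2/18) with hE
  have hE0 : 0 < E := Real.exp_pos _
  set S₁ : ℝ := ∑ x, Real.exp (D2 (sec A b) x / 72) with hS₁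
  set S₂ : ℝ := ∑ x, Real.exp (D2 (sec A (!b)) x / 72) with hS₂
  have hS₁0 : 0 ≤ S₁ := Finset.sum_nonneg fun _ _ => (Real.exp_pos _).le
  have hS₂0 : 0 ≤ S₂ := Finset.sum_nonneg fun _ _ => (Real.exp_pos _).le
  have h4n : (0:ℝ) < 4^n := by positivity
  -- small side bound
  have hsmall : (∑ x : Fin n → Bool, Real.exp (D2 A (Fin.cons b x) / 72))
      ≤ E * (l * S₁ + (1-l) * S₂) := by
    have hterm : ∀ x : Fin n → Bool, Real.exp (D2 A (Fin.cons b x) / 72)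
        ≤ E * (l * Real.exp (D2 (sec A b) x / 72) + (1-l) * Real.exp (D2 (sec A (!b)) x / 72)) := by
      intro x
      have h1 : Real.exp (D2 A (Fin.cons b x) / 72)
          ≤ Real.exp ((l * D2 (sec A b) x + (1-l) * D2 (sec A (!b)) x + 4*(1-l)^2) / 72) :=
        Real.exp_le_exp.2 (div_le_div_of_nonneg_right (D2_cons_comb hb hb' hl0 hl1 x) (by norm_num))
      have h2 : (l * D2 (sec A b) x + (1-l) * D2 (sec A (!b)) x + 4*(1-l)^2) / 72
          = u^2/18 + (l * (D2 (sec A b) x / 72) + (1-l) * (D2 (sec A (!b)) x / 72)) := by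
        rw [hu]; ring
      have h3 : Real.exp (l * (D2 (sec A b) x / 72) + (1-l) * (D2 (sec A (!b)) x / 72))
          ≤ l * Real.exp (D2 (sec A b) x / 72) + (1-l) * Real.exp (D2 (sec A (!b)) x / 72) := by
        have := convexOn_exp.2 (Set.mem_univ (D2 (sec A b) x / 72))
          (Set.mem_univ (D2 (sec A (!b)) x / 72)) hl0 (by linarith : (0:ℝ) ≤ 1 - l) (by ring)
        simpa using this
      calc Real.exp (D2 A (Fin.cons b x) / 72)
          ≤ Real.exp (u^2/18 + (l * (D2 (sec A b) x / 72) + (1-l) * (D2 (sec A (!b)) x / 72))) := by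
            rw [← h2]; exact h1
        _ = E * Real.exp (l * (D2 (sec A b) x / 72) + (1-l) * (D2 (sec A (!b)) x / 72)) := by
            rw [Real.exp_add, hE]
        _ ≤ E * (l * Real.exp (D2 (sec A b) x / 72) + (1-l) * Real.exp (D2 (sec A (!b)) x / 72)) :=
            mul_le_mul_of_nonneg_left h3 hE0.le
    calc (∑ x : Fin n → Bool, Real.exp (D2 A (Fin.cons b x) / 72))
        ≤ ∑ x : Fin n → Bool, E * (l * Real.exp (D2 (sec A b) x / 72)
            + (1-l) * Real.exp (D2 (sec A (!b)) x / 72)) := Finset.sum_le_sum fun x _ => hterm x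
      _ = E * (l * S₁ + (1-l) * S₂) := by
          rw [hS₁, hS₂, Finset.mul_sum, Finset.mul_sum, ← Finset.sum_add_distrib, Finset.mul_sum]
  have hbig : (∑ x : Fin n → Bool, Real.exp (D2 A (Fin.cons (!b) x) / 72)) ≤ S₂ := by
    have := side_le (A := A) hb' (!b)
    simpa [hS₂] using this
  have e1 : l * S₁ ≤ 4^n/γ := by
    calc l * S₁ ≤ l * (4^n/α) := mul_le_mul_of_nonneg_left IHb hl0
      _ = 4^n/γ := by rw [hl]; field_simp
  have e2 : (1-l) * S₂ ≤ u * (4^n/γ) := by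
    rw [← hu]
    exact mul_le_mul_of_nonneg_left IHb' hu0
  have hcomb : E * (l * S₁ + (1-l) * S₂) + S₂ ≤ (4^n/γ) * (1 + E*(1+u)) := by
    have h5 : l * S₁ + (1-l) * S₂ ≤ (1+u) * (4^n/γ) := by linarith
    have h6 := mul_le_mul_of_nonneg_left h5 hE0.le
    linarith [h6, IHb']
  have hαl : α = l * γ := by rw [hl]; field_simp
  have hsum : α + γ = (2-u) * γ := by rw [hαl, hu]; ring
  have h2u : 0 < 2-u := by linarith
  have key := numeric_key hu0 hu1
  calc (∑ x : Fin n → Bool, Real.exp (D2 A (Fin.cons b x) / 72))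
      + (∑ x : Fin n → Bool, Real.exp (D2 A (Fin.cons (!b) x) / 72))
      ≤ (4^n/γ) * (1 + E*(1+u)) := by linarith
    _ ≤ 4^(n+1) / (α + γ) := by
        rw [hsum, pow_succ, div_mul_eq_mul_div, div_le_div_iff₀ hγ0 (mul_pos h2u hγ0)]
        have h8 := mul_le_mul_of_nonneg_left key (le_of_lt (mul_pos h4n hγ0))
        rw [← hE] at h8
        nlinarith [h8]
  
end CubeTal

namespace CubeTal

theorem master : ∀ {n : ℕ} (A : Finset (Fin n → Bool)), A.Nonempty →
    (∑ x : Fin n → Bool, Real.exp (D2 A x / 72)) ≤ 4^n / (A.card : ℝ) := by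
  intro n
  induction n with
  | zero =>
    intro A hA
    obtain ⟨a, ha⟩ := hA
    have hA : A.Nonempty := ⟨a, ha⟩
    have hAu : A = Finset.univ := Finset.eq_univ_of_card A (le_antisymm (Finset.card_le_univ A)
      (by simpa using Finset.card_pos.2 hA))
    have hcard : A.card = 1 := by
      rw [hAu]; simp [Finset.card_univ]
    have hD : D2 A (fun i => i.elim0) = 0 := by
      refine le_antisymm ?_ (D2_nonneg hA _)
      have := D2_le_d2 (isWeight_pointMass ha) (fun i => i.elim0)
      simpa [d2] using this
    have : ∀ x : Fin 0 → Bool, D2 A x = 0 := by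
      intro x
      have hx : x = (fun i => i.elim0) := by funext i; exact i.elim0
      rw [hx, hD]
    rw [Fintype.sum_eq_single (fun i : Fin 0 => i.elim0) (fun x hx => absurd (by funext i; exact i.elim0) hx)]
    rw [hD, hcard]
    norm_num
  | succ n IH =>
    intro A hA
    rw [cube_sum (fun x => Real.exp (D2 A x / 72))]
    have hcards : (A.card : ℝ) = ((sec A true).card : ℝ) + ((sec A false).card : ℝ) := by
      rw [card_split A]; push_cast; ring
    rcases Finset.eq_empty_or_nonempty (sec A true) with hT | hT
    · -- sec A true empty, all mass on false side
      have hF : (sec A false).Nonempty := by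
        rw [Finset.nonempty_iff_ne_empty]
        intro hFe
        have : A.card = 0 := by rw [card_split, hT, hFe]; simp
        exact absurd (Finset.card_eq_zero.1 this) (Finset.nonempty_iff_ne_empty.1 hA)
      have hcard : (A.card : ℝ) = ((sec A false).card : ℝ) := by
        rw [hcards, hT]; simp
      have hγ0 : (0:ℝ) < ((sec A false).card : ℝ) := by exact_mod_cast Finset.card_pos.2 hF
      have h1 := side_le (A := A) hF true
      have h2 := side_le (A := A) hF false
      have hS := IH (sec A false) hF
      have hS0 : 0 ≤ ∑ x, Real.exp (D2 (sec A false) x / 72) :=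
        Finset.sum_nonneg fun _ _ => (Real.exp_pos _).le
      have hchi1 : (chi true - chi false)^2 = 4 := by norm_num [chi]
      have hchi2 : (chi false - chi false)^2 = 0 := by norm_num [chi]
      rw [hchi1] at h1
      rw [hchi2] at h2
      have hexp : Real.exp ((4:ℝ)/72) ≤ 3 := exp_const_bound
      have hE0 : 0 < Real.exp ((4:ℝ)/72) := Real.exp_pos _
      have h4n : (0:ℝ) < 4^n := by positivity
      rw [hcard]
      have hfinal : Real.exp ((4:ℝ)/72) * (∑ x, Real.exp (D2 (sec A false) x / 72))
          + (∑ x, Real.exp (D2 (sec A false) x / 72)) ≤ 4 * (4^n / ((sec A false).card : ℝ)) := by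
        nlinarith [mul_le_mul_of_nonneg_left hS hE0.le, mul_le_mul_of_nonneg_right hexp hS0]
      have : (4:ℝ)^(n+1) / ((sec A false).card : ℝ) = 4 * (4^n / ((sec A false).card : ℝ)) := by
        rw [pow_succ]; ring
      rw [this]
      simp only [zero_div, Real.exp_zero, one_mul] at h2
      linarith
    · rcases Finset.eq_empty_or_nonempty (sec A false) with hF | hF
      · -- sec A false empty
        have hcard : (A.card : ℝ) = ((sec A true).card : ℝ) := by
          rw [hcards, hF]; simp
        have hγ0 : (0:ℝ) < ((sec A true).card : ℝ) := by exact_mod_cast Finset.card_pos.2 hT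
        have h1 := side_le (A := A) hT true
        have h2 := side_le (A := A) hT false
        have hS := IH (sec A true) hT
        have hS0 : 0 ≤ ∑ x, Real.exp (D2 (sec A true) x / 72) :=
          Finset.sum_nonneg fun _ _ => (Real.exp_pos _).le
        have hchi1 : (chi false - chi true)^2 = 4 := by norm_num [chi]
        have hchi2 : (chi true - chi true)^2 = 0 := by norm_num [chi]
        rw [hchi2] at h1
        rw [hchi1] at h2
        have hexp : Real.exp ((4:ℝ)/72) ≤ 3 := exp_const_bound
        have hE0 : 0 < Real.exp ((4:ℝ)/72) := Real.exp_pos _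
        have h4n : (0:ℝ) < 4^n := by positivity
        rw [hcard]
        have hfinal : Real.exp ((4:ℝ)/72) * (∑ x, Real.exp (D2 (sec A true) x / 72))
            + (∑ x, Real.exp (D2 (sec A true) x / 72)) ≤ 4 * (4^n / ((sec A true).card : ℝ)) := by
          nlinarith [mul_le_mul_of_nonneg_left hS hE0.le, mul_le_mul_of_nonneg_right hexp hS0]
        have heq : (4:ℝ)^(n+1) / ((sec A true).card : ℝ) = 4 * (4^n / ((sec A true).card : ℝ)) := by
          rw [pow_succ]; ring
        rw [heq]
        simp only [zero_div, Real.exp_zero, one_mul] at h1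
        linarith
      · -- both nonempty
        rcases le_total (sec A true).card (sec A false).card with hle | hle
        · have := step_both (b := true) hT (by simpa using hF) (by simpa using hle)
            (IH _ hT) (by simpa using IH _ hF)
          rw [hcards]
          simpa using this
        · have := step_both (b := false) hF (by simpa using hT) (by simpa using hle)
            (IH _ hF) (by simpa using IH _ hT)
          rw [hcards]
          have h' : ((sec A true).card : ℝ) + ((sec A false).card : ℝ)
              = ((sec A false).card : ℝ) + ((sec A (!false)).card : ℝ) := by simp; ring
          rw [h']
          simp only [Bool.not_false] at this ⊢
          linarith [this]

end CubeTal

namespace CubeTal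

section Banach
variable {E : Type*} [NormedAddCommGroup E] [NormedSpace ℝ E] {N : ℕ}

instance : Nonempty {f : E →L[ℝ] ℝ // ‖f‖ ≤ 1} := ⟨⟨0, by simp⟩⟩

lemma abs_apply_le {z : E} {g : E →L[ℝ] ℝ} (hg : ‖g‖ ≤ 1) : |g z| ≤ ‖z‖ := by
  calc |g z| = ‖g z‖ := (Real.norm_eq_abs _).symm
    _ ≤ ‖g‖ * ‖z‖ := g.le_opNorm z
    _ ≤ 1 * ‖z‖ := mul_le_mul_of_nonneg_right hg (norm_nonneg _)
    _ = ‖z‖ := one_mul _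

lemma l1w_bdd (y : Fin N → E) :
    BddAbove (Set.range fun f : {f : E →L[ℝ] ℝ // ‖f‖ ≤ 1} => ∑ n, |f.1 (y n)|) := by
  refine ⟨∑ n, ‖y n‖, ?_⟩
  rintro r ⟨f, rfl⟩
  exact Finset.sum_le_sum fun n _ => abs_apply_le f.2

lemma le_l1w {y : Fin N → E} {g : E →L[ℝ] ℝ} (hg : ‖g‖ ≤ 1) :
    ∑ n, |g (y n)| ≤ l1wFin y :=
  le_ciSup (l1w_bdd y) (⟨g, hg⟩ : {f : E →L[ℝ] ℝ // ‖f‖ ≤ 1})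

lemma l1w_nonneg (y : Fin N → E) : 0 ≤ l1wFin y := by
  have := le_l1w (y := y) (g := 0) (by simp)
  simpa using this

lemma l2w_bdd (z : Fin N → E) :
    BddAbove (Set.range fun f : {f : E →L[ℝ] ℝ // ‖f‖ ≤ 1} =>
      (∑ n, (f.1 (z n))^2) ^ ((1:ℝ)/2)) := by
  refine ⟨(∑ n, ‖z n‖^2) ^ ((1:ℝ)/2), ?_⟩
  rintro r ⟨f, rfl⟩
  refine Real.rpow_le_rpow (Finset.sum_nonneg fun n _ => sq_nonneg _) ?_ (by norm_num)
  refine Finset.sum_le_sum fun n _ => ?_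
  calc (f.1 (z n))^2 = |f.1 (z n)|^2 := (sq_abs _).symm
    _ ≤ ‖z n‖^2 := pow_le_pow_left₀ (abs_nonneg _) (abs_apply_le f.2) 2

lemma le_l2w {z : Fin N → E} {g : E →L[ℝ] ℝ} (hg : ‖g‖ ≤ 1) :
    (∑ n, (g (z n))^2) ^ ((1:ℝ)/2) ≤ l2wFin z :=
  le_ciSup (l2w_bdd z) (⟨g, hg⟩ : {f : E →L[ℝ] ℝ // ‖f‖ ≤ 1})

lemma l2w_nonneg (z : Fin N → E) : 0 ≤ l2wFin z := by
  have h := le_l2w (z := z) (g := 0) (by simp)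
  simp only [ContinuousLinearMap.zero_apply] at h
  rw [show (∑ _n : Fin N, ((0:ℝ))^2) = 0 by simp] at h
  rwa [Real.zero_rpow (by norm_num)] at h

lemma l2w_eq_zero {z : Fin N → E} (h : l2wFin z = 0) (n : Fin N) : z n = 0 := by
  by_contra hzn
  obtain ⟨g, hg1, hgx⟩ := exists_dual_vector ℝ (z n) (norm_ne_zero_iff.2 hzn)
  have hgx' : g (z n) = ‖z n‖ := by exact_mod_cast hgx
  have hterm : ‖z n‖^2 ≤ ∑ m, (g (z m))^2 := by
    have := Finset.single_le_sum (f := fun m => (g (z m))^2)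
      (fun m _ => sq_nonneg _) (Finset.mem_univ n)
    simpa only [hgx'] using this
  have hpos : 0 < (∑ m, (g (z m))^2) ^ ((1:ℝ)/2) := by
    refine Real.rpow_pos_of_pos ?_ _
    have hz2 : (0:ℝ) < ‖z n‖^2 := pow_pos (norm_pos_iff.2 hzn) 2
    linarith
  have := le_l2w (z := z) (g := g) (le_of_eq hg1)
  rw [h] at this
  linarith

/-- `‖∑ aₙ • zₙ‖ ≤ ℓ₂ʷ(z) · √(∑ aₙ²)`. -/
lemma norm_sum_le_l2w (z : Fin N → E) (a : Fin N → ℝ) :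
    ‖∑ n, a n • z n‖ ≤ l2wFin z * Real.sqrt (∑ n, (a n)^2) := by
  rcases eq_or_ne (∑ n, a n • z n) 0 with h | h
  · rw [h, norm_zero]
    exact mul_nonneg (l2w_nonneg z) (Real.sqrt_nonneg _)
  · obtain ⟨g, hg1, hgx⟩ := exists_dual_vector ℝ _ (norm_ne_zero_iff.2 h)
    have hmap : (g (∑ n, a n • z n)) = ∑ n, a n * g (z n) := by
      rw [map_sum]
      exact Finset.sum_congr rfl fun n _ => by rw [_root_.map_smul]; rfl
    have hgx' : g (∑ n, a n • z n) = ‖∑ n, a n • z n‖ := by exact_mod_cast hgx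
    have hnorm : ‖∑ n, a n • z n‖ = ∑ n, a n * g (z n) := by
      rw [← hmap, hgx']
    have hCS : (∑ n, a n * g (z n))^2 ≤ (∑ n, (a n)^2) * (∑ n, (g (z n))^2) :=
      Finset.sum_mul_sq_le_sq_mul_sq _ _ _
    have h1 : ‖∑ n, a n • z n‖ ≤ Real.sqrt ((∑ n, (a n)^2) * (∑ n, (g (z n))^2)) := by
      rw [hnorm]
      calc (∑ n, a n * g (z n)) ≤ |∑ n, a n * g (z n)| := le_abs_self _
        _ = Real.sqrt ((∑ n, a n * g (z n))^2) := (Real.sqrt_sq_eq_abs _).symm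
        _ ≤ Real.sqrt ((∑ n, (a n)^2) * (∑ n, (g (z n))^2)) := Real.sqrt_le_sqrt hCS
    rw [Real.sqrt_mul (Finset.sum_nonneg fun n _ => sq_nonneg _)] at h1
    refine h1.trans ?_
    rw [mul_comm]
    refine mul_le_mul_of_nonneg_right ?_ (Real.sqrt_nonneg _)
    rw [Real.sqrt_eq_rpow]
    exact le_l2w (le_of_eq hg1)

/-- trivial bound `‖∑ sₙ • yₙ‖ ≤ ℓ₁ʷ(y)` for `|sₙ| ≤ 1`. -/
lemma norm_sum_le_l1w (y : Fin N → E) (s : Fin N → ℝ) (hs : ∀ n, |s n| ≤ 1) :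
    ‖∑ n, s n • y n‖ ≤ l1wFin y := by
  rcases eq_or_ne (∑ n, s n • y n) 0 with h | h
  · rw [h, norm_zero]; exact l1w_nonneg y
  · obtain ⟨g, hg1, hgx⟩ := exists_dual_vector ℝ _ (norm_ne_zero_iff.2 h)
    have hmap : (g (∑ n, s n • y n)) = ∑ n, s n * g (y n) := by
      rw [map_sum]
      exact Finset.sum_congr rfl fun n _ => by rw [_root_.map_smul]; rfl
    have hgx' : g (∑ n, s n • y n) = ‖∑ n, s n • y n‖ := by exact_mod_cast hgx
    rw [← hgx', hmap]
    calc (∑ n, s n * g (y n)) ≤ ∑ n, |g (y n)| := by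
          refine Finset.sum_le_sum fun n _ => ?_
          calc s n * g (y n) ≤ |s n * g (y n)| := le_abs_self _
            _ = |s n| * |g (y n)| := abs_mul _ _
            _ ≤ 1 * |g (y n)| := mul_le_mul_of_nonneg_right (hs n) (abs_nonneg _)
            _ = |g (y n)| := one_mul _
      _ ≤ l1wFin y := le_l1w (le_of_eq hg1)

end Banach

end CubeTal

namespace CubeTal

section Tail
variable {E : Type*} [NormedAddCommGroup E] [NormedSpace ℝ E] {N : ℕ}

lemma cube_tail (z : Fin N → E) (t : ℝ) (ht : 0 < t) (hσ : 0 < l2wFin z) :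
    ((Finset.univ.filter (fun v : Fin N → Bool =>
        2 * ((∑ u : Fin N → Bool, ‖∑ i, chi (u i) • z i‖) / 2^N) + 3 * (t * l2wFin z)
          < ‖∑ i, chi (v i) • z i‖)).card : ℝ)
      ≤ 2 * 2^N * Real.exp (-t^2/8) := by
  classical
  set f : (Fin N → Bool) → ℝ := fun v => ‖∑ i, chi (v i) • z i‖ with hf
  set σ : ℝ := l2wFin z with hσdef
  set μf : ℝ := (∑ u : Fin N → Bool, f u) / 2^N with hμf
  set A : Finset (Fin N → Bool) := Finset.univ.filter (fun v => f v ≤ 2*μf) with hA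
  set bad : Finset (Fin N → Bool) := Finset.univ.filter (fun v => 2*μf + 3*(t*σ) < f v) with hbad
  have hf0 : ∀ v, 0 ≤ f v := fun v => norm_nonneg _
  have h2N : (0:ℝ) < 2^N := by positivity
  have hμ0 : 0 ≤ μf := div_nonneg (Finset.sum_nonneg fun v _ => hf0 v) h2N.le
  have hcube : ((Finset.univ : Finset (Fin N → Bool)).card : ℝ) = 2^N := by
    rw [Finset.card_univ]
    rw [show Fintype.card (Fin N → Bool) = 2^N by simp [Fintype.card_fun]]
    push_cast; ring
  -- Markov: at least half the cube is in A
  have hAcard : (2:ℝ)^N ≤ 2 * A.card := by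
    have hsplitn := Finset.card_filter_add_card_filter_not
        (s := (Finset.univ : Finset (Fin N → Bool))) (p := fun v => f v ≤ 2*μf)
    have hsplit : (A.card : ℝ) + ((Finset.univ.filter (fun v => ¬ (f v ≤ 2*μf))).card : ℝ)
        = 2^N := by
      rw [← hcube, hA]
      exact_mod_cast hsplitn
    rcases eq_or_lt_of_le hμ0 with hμz | hμpos
    · have hsum0 : ∑ u : Fin N → Bool, f u = 0 := by
        have : μf = 0 := hμz.symm
        rw [hμf] at this
        field_simp at this
        simpa using this
      have hfz : ∀ v, f v = 0 := by
        intro v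
        have := (Finset.sum_eq_zero_iff_of_nonneg (fun u _ => hf0 u)).1 hsum0 v (Finset.mem_univ v)
        exact this
      have : A = Finset.univ := by
        apply Finset.eq_univ_of_forall
        intro v
        rw [hA, Finset.mem_filter]
        exact ⟨Finset.mem_univ v, by rw [hfz v]; linarith⟩
      rw [this, hcube]
      linarith
    · set B := Finset.univ.filter (fun v => ¬ (f v ≤ 2*μf)) with hB
      have hBsum : (B.card : ℝ) * (2*μf) ≤ ∑ u : Fin N → Bool, f u := by
        calc (B.card : ℝ) * (2*μf) = B.card • (2*μf) := by rw [nsmul_eq_mul]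
          _ ≤ ∑ v ∈ B, f v := Finset.card_nsmul_le_sum B f (2*μf)
              (fun v hv => by
                rw [hB, Finset.mem_filter] at hv
                linarith [not_le.1 hv.2])
          _ ≤ ∑ u : Fin N → Bool, f u :=
              Finset.sum_le_sum_of_subset_of_nonneg (Finset.filter_subset _ _)
                (fun u _ _ => hf0 u)
      have hsumeq : ∑ u : Fin N → Bool, f u = 2^N * μf := by
        rw [hμf]; field_simp
      rw [hsumeq] at hBsum
      have hBle : (B.card : ℝ) ≤ 2^N / 2 := by
        nlinarith
      linarith [hsplit]
  have hAne : A.Nonempty := by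
    rw [← Finset.card_pos]
    have hpos : (0:ℝ) < A.card := by nlinarith
    exact_mod_cast hpos
  -- distance lower bound on the bad set
  have hD2bad : ∀ v ∈ bad, 9*t^2 ≤ D2 A v := by
    intro v hv
    rw [hbad, Finset.mem_filter] at hv
    have hv2 := hv.2
    refine le_csInf (D2_set_nonempty hAne v) ?_
    rintro r ⟨w, hw, rfl⟩
    -- f v ≤ 2 μf + σ √(d2 w v)
    have hdec : (∑ i, chi (v i) • z i)
        = (∑ i, ctr w i • z i) + ∑ i, (chi (v i) - ctr w i) • z i := by
      rw [← Finset.sum_add_distrib]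
      refine Finset.sum_congr rfl fun i _ => ?_
      rw [← add_smul]; ring_nf
    have hswap : (∑ i, ctr w i • z i) = ∑ u : Fin N → Bool, w u • (∑ i, chi (u i) • z i) := by
      unfold ctr
      calc ∑ i, (∑ u : Fin N → Bool, w u * chi (u i)) • z i
          = ∑ i, ∑ u : Fin N → Bool, (w u * chi (u i)) • z i := by
            refine Finset.sum_congr rfl fun i _ => ?_
            rw [Finset.sum_smul]
        _ = ∑ u : Fin N → Bool, ∑ i, (w u * chi (u i)) • z i := Finset.sum_comm
        _ = ∑ u : Fin N → Bool, w u • (∑ i, chi (u i) • z i) := by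
            refine Finset.sum_congr rfl fun u _ => ?_
            rw [Finset.smul_sum]
            refine Finset.sum_congr rfl fun i _ => ?_
            rw [smul_smul]
    have hcenter : ‖∑ i, ctr w i • z i‖ ≤ 2*μf := by
      rw [hswap]
      calc ‖∑ u : Fin N → Bool, w u • (∑ i, chi (u i) • z i)‖
          ≤ ∑ u : Fin N → Bool, ‖w u • (∑ i, chi (u i) • z i)‖ := norm_sum_le _ _
        _ = ∑ u : Fin N → Bool, w u * f u := by
            refine Finset.sum_congr rfl fun u _ => ?_
            rw [norm_smul, Real.norm_eq_abs, abs_of_nonneg (hw.1 u)]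
        _ ≤ ∑ u : Fin N → Bool, w u * (2*μf) := by
            refine Finset.sum_le_sum fun u _ => ?_
            by_cases hu : u ∈ A
            · rw [hA, Finset.mem_filter] at hu
              exact mul_le_mul_of_nonneg_left hu.2 (hw.1 u)
            · rw [hw.2.1 u hu]
              simp
        _ = 2*μf := by rw [← Finset.sum_mul, hw.2.2, one_mul]
    have htail : ‖∑ i, (chi (v i) - ctr w i) • z i‖ ≤ σ * Real.sqrt (d2 w v) := by
      have := norm_sum_le_l2w z (fun i => chi (v i) - ctr w i)
      rw [hσdef]
      exact this
    have hfv : f v ≤ 2*μf + σ * Real.sqrt (d2 w v) := by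
      rw [hf]
      dsimp only
      rw [hdec]
      calc ‖(∑ i, ctr w i • z i) + ∑ i, (chi (v i) - ctr w i) • z i‖
          ≤ ‖∑ i, ctr w i • z i‖ + ‖∑ i, (chi (v i) - ctr w i) • z i‖ := norm_add_le _ _
        _ ≤ 2*μf + σ * Real.sqrt (d2 w v) := add_le_add hcenter htail
    have h3t : 3*t ≤ Real.sqrt (d2 w v) := by
      have hσs : σ * (3*t) < σ * Real.sqrt (d2 w v) := by nlinarith
      have := (mul_lt_mul_iff_right₀ hσ).1 hσs
      linarith
    calc 9*t^2 = (3*t)^2 := by ring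
      _ ≤ (Real.sqrt (d2 w v))^2 := by
          refine pow_le_pow_left₀ (by positivity) h3t 2
      _ = d2 w v := Real.sq_sqrt (d2_nonneg w v)
  -- Chernoff counting
  have hcount : (bad.card : ℝ) * Real.exp (t^2/8) ≤ ∑ v : Fin N → Bool, Real.exp (D2 A v / 72) := by
    calc (bad.card : ℝ) * Real.exp (t^2/8) = bad.card • Real.exp (t^2/8) := by rw [nsmul_eq_mul]
      _ ≤ ∑ v ∈ bad, Real.exp (D2 A v / 72) := by
          refine Finset.card_nsmul_le_sum bad _ _ (fun v hv => ?_)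
          refine Real.exp_le_exp.2 ?_
          have := hD2bad v hv
          linarith
      _ ≤ ∑ v : Fin N → Bool, Real.exp (D2 A v / 72) :=
          Finset.sum_le_sum_of_subset_of_nonneg (Finset.filter_subset _ _)
            (fun v _ _ => (Real.exp_pos _).le)
  have hmaster := master A hAne
  have hApos : (0:ℝ) < A.card := by nlinarith
  have hbound : (4:ℝ)^N / (A.card : ℝ) ≤ 2 * 2^N := by
    rw [div_le_iff₀ hApos]
    have h4 : (4:ℝ)^N = 2^N * 2^N := by
      rw [show (4:ℝ) = 2*2 by norm_num, mul_pow]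
    nlinarith
  have hfinal : (bad.card : ℝ) * Real.exp (t^2/8) ≤ 2 * 2^N := by
    calc (bad.card : ℝ) * Real.exp (t^2/8)
        ≤ ∑ v : Fin N → Bool, Real.exp (D2 A v / 72) := hcount
      _ ≤ 4^N / (A.card : ℝ) := hmaster
      _ ≤ 2 * 2^N := hbound
  have hexp : (0:ℝ) < Real.exp (t^2/8) := Real.exp_pos _
  rw [show (-t^2/8 : ℝ) = -(t^2/8) by ring, Real.exp_neg]
  have hdiv : (bad.card : ℝ) ≤ 2*2^N / Real.exp (t^2/8) := by
    rw [le_div_iff₀ hexp]; exact hfinal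
  rwa [div_eq_mul_inv] at hdiv

end Tail

end CubeTal

namespace CubeTal

open MeasureTheory

lemma abs_chi (b : Bool) : |chi b| = 1 := by cases b <;> norm_num [chi]

section Transfer
variable {Ω : Type*} [MeasurableSpace Ω] {μ : Measure Ω} [IsProbabilityMeasure μ]
  {N : ℕ} {ε : Fin N → Ω → ℝ}
  {E : Type*} [NormedAddCommGroup E] [NormedSpace ℝ E]

def Phi (ε : Fin N → Ω → ℝ) (ω : Ω) (n : Fin N) : Bool := if 0 < ε n ω then true else false

lemma measurable_Phi (hε : IsRademacherFin μ ε) : Measurable (Phi ε) := by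
  refine measurable_pi_lambda _ (fun n => ?_)
  have hS : MeasurableSet {ω | 0 < ε n ω} := measurableSet_lt measurable_const (hε.1 n)
  exact Measurable.ite hS measurable_const measurable_const

lemma measure_pos_half (hε : IsRademacherFin μ ε) (n : Fin N) :
    μ (ε n ⁻¹' Set.Ioi 0) = 1/2 ∧ μ ((ε n ⁻¹' Set.Ioi 0)ᶜ) = 1/2 := by
  have hS : MeasurableSet (ε n ⁻¹' Set.Ioi 0) := (hε.1 n) measurableSet_Ioi
  have h1 := (hε.2.2 n).1
  have h2 := (hε.2.2 n).2
  have hsub1 : {ω | ε n ω = 1} ⊆ ε n ⁻¹' Set.Ioi 0 := fun ω hω => by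
    simp only [Set.mem_setOf_eq] at hω
    simp [Set.mem_preimage, hω]
  have hsub2 : {ω | ε n ω = -1} ⊆ (ε n ⁻¹' Set.Ioi 0)ᶜ := fun ω hω => by
    simp only [Set.mem_setOf_eq] at hω
    simp [Set.mem_preimage, hω]
  have ha : 1/2 ≤ μ (ε n ⁻¹' Set.Ioi 0) := h1 ▸ measure_mono hsub1
  have hb : 1/2 ≤ μ ((ε n ⁻¹' Set.Ioi 0)ᶜ) := h2 ▸ measure_mono hsub2
  rw [prob_compl_eq_one_sub hS] at hb
  have hle1 : μ (ε n ⁻¹' Set.Ioi 0) ≤ 1 := prob_le_one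
  have hsum : μ (ε n ⁻¹' Set.Ioi 0) + 1/2 ≤ 1 :=
    le_trans (add_le_add_right hb _) (le_of_eq (add_tsub_cancel_of_le hle1))
  have hhalf : μ (ε n ⁻¹' Set.Ioi 0) ≤ 1/2 := by
    by_contra hlt
    push_neg at hlt
    have hlt2 : (1:ENNReal) < μ (ε n ⁻¹' Set.Ioi 0) + 1/2 := by
      calc (1:ENNReal) = 1/2 + 1/2 := (ENNReal.add_halves 1).symm
        _ < μ (ε n ⁻¹' Set.Ioi 0) + 1/2 :=
            ENNReal.add_lt_add_right (by norm_num) hlt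
    exact absurd hsum (not_le.2 hlt2)
  have heq : μ (ε n ⁻¹' Set.Ioi 0) = 1/2 := le_antisymm hhalf ha
  refine ⟨heq, ?_⟩
  rw [prob_compl_eq_one_sub hS, heq]
  exact ENNReal.sub_half ENNReal.one_ne_top

lemma measure_Phi_fiber (hε : IsRademacherFin μ ε) (v : Fin N → Bool) :
    μ (Phi ε ⁻¹' {v}) = ((2:ENNReal)^N)⁻¹ := by
  classical
  have hfib : Phi ε ⁻¹' {v}
      = ⋂ n, (if v n then ε n ⁻¹' Set.Ioi 0 else (ε n ⁻¹' Set.Ioi 0)ᶜ) := by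
    ext ω
    simp only [Set.mem_preimage, Set.mem_singleton_iff, Set.mem_iInter, funext_iff, Phi]
    refine forall_congr' (fun n => ?_)
    cases hv : v n
    · simp only [hv, Bool.false_eq_true, if_false, Set.mem_compl_iff, Set.mem_preimage,
        Set.mem_Ioi]
      constructor
      · intro h
        intro hlt
        rw [if_pos hlt] at h
        exact Bool.true_eq_false.mp h
      · intro h
        rw [if_neg h]
    · simp only [hv, if_true, Set.mem_preimage, Set.mem_Ioi]
      constructor
      · intro h
        by_contra hlt
        rw [if_neg hlt] at h
        exact Bool.false_eq_true.mp h
      · intro h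
        rw [if_pos h]
  rw [hfib, (hε.2.1).meas_iInter (fun n => ?_)]
  · have : ∀ n : Fin N, μ (if v n then ε n ⁻¹' Set.Ioi 0 else (ε n ⁻¹' Set.Ioi 0)ᶜ)
        = 1/2 := by
      intro n
      cases hv : v n
      · simp only [hv, Bool.false_eq_true, if_false]
        exact (measure_pos_half hε n).2
      · simp only [hv, if_true]
        exact (measure_pos_half hε n).1
    rw [Finset.prod_congr rfl (fun n _ => this n), Finset.prod_const, Finset.card_univ,
      Fintype.card_fin, one_div, ENNReal.inv_pow]
  · cases hv : v n
    · simp only [hv, Bool.false_eq_true, if_false]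
      exact ⟨Set.Iic 0, measurableSet_Iic, by rw [← Set.compl_Ioi, Set.preimage_compl]⟩
    · simp only [hv, if_true]
      exact ⟨Set.Ioi 0, measurableSet_Ioi, rfl⟩

lemma good_ae (hε : IsRademacherFin μ ε) :
    ∀ᵐ ω ∂μ, ∀ n, ε n ω = chi (Phi ε ω n) := by
  rw [ae_all_iff]
  intro n
  have hm1 : MeasurableSet {ω | ε n ω = 1} := (hε.1 n) (measurableSet_singleton 1)
  have hm2 : MeasurableSet {ω | ε n ω = -1} := (hε.1 n) (measurableSet_singleton (-1))
  have hdisj : Disjoint {ω | ε n ω = 1} {ω | ε n ω = -1} := by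
    rw [Set.disjoint_left]
    intro ω h1 h2
    simp only [Set.mem_setOf_eq] at h1 h2
    rw [h1] at h2
    norm_num at h2
  have hGn : μ ({ω | ε n ω = 1} ∪ {ω | ε n ω = -1}) = 1 := by
    rw [measure_union hdisj hm2, (hε.2.2 n).1, (hε.2.2 n).2]
    exact ENNReal.add_halves 1
  have hnull : μ ({ω | ε n ω = 1} ∪ {ω | ε n ω = -1})ᶜ = 0 :=
    (prob_compl_eq_zero_iff (hm1.union hm2)).2 hGn
  rw [ae_iff]
  refine measure_mono_null ?_ hnull
  intro ω hω
  simp only [Set.mem_setOf_eq] at hω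
  simp only [Set.mem_compl_iff, Set.mem_union, Set.mem_setOf_eq]
  intro hmem
  apply hω
  rcases hmem with h1 | h1
  · rw [h1]
    have : Phi ε ω n = true := by simp [Phi, h1]
    rw [this]
    norm_num [chi]
  · rw [h1]
    have : Phi ε ω n = false := by simp [Phi, h1]
    rw [this]
    norm_num [chi]

lemma sm_norm_sum (hε : IsRademacherFin μ ε) (z : Fin N → E) :
    StronglyMeasurable (fun ω => ‖∑ n, ε n ω • z n‖) :=
  by have := (Finset.stronglyMeasurable_sum Finset.univ
    (fun n _ => ((hε.1 n).stronglyMeasurable).smul_const (z n))).norm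
     simpa [Finset.sum_apply] using this

lemma integrable_norm_sum (hε : IsRademacherFin μ ε) (z : Fin N → E) :
    Integrable (fun ω => ‖∑ n, ε n ω • z n‖) μ := by
  refine Integrable.mono' (integrable_const (∑ n, ‖z n‖))
    (sm_norm_sum hε z).aestronglyMeasurable ?_
  filter_upwards [good_ae hε] with ω hω
  rw [Real.norm_eq_abs, abs_of_nonneg (norm_nonneg _)]
  calc ‖∑ n, ε n ω • z n‖ ≤ ∑ n, ‖ε n ω • z n‖ := norm_sum_le _ _
    _ = ∑ n, ‖z n‖ := Finset.sum_congr rfl fun n _ => by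
        rw [norm_smul, Real.norm_eq_abs, hω n, abs_chi, one_mul]

lemma integral_eq_cube (hε : IsRademacherFin μ ε) (z : Fin N → E) :
    (∫ ω, ‖∑ n, ε n ω • z n‖ ∂μ)
      = (∑ v : Fin N → Bool, ‖∑ i, chi (v i) • z i‖) / 2^N := by
  classical
  have h1 : (∫ ω, ‖∑ n, ε n ω • z n‖ ∂μ)
      = ∫ ω, (fun v : Fin N → Bool => ‖∑ i, chi (v i) • z i‖) (Phi ε ω) ∂μ := by
    refine integral_congr_ae ?_
    filter_upwards [good_ae hε] with ω hω
    have heqs : (∑ n, ε n ω • z n) = ∑ i, chi (Phi ε ω i) • z i :=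
      Finset.sum_congr rfl fun n _ => by rw [hω n]
    exact congrArg norm heqs
  have hsm : StronglyMeasurable (fun v : Fin N → Bool => ‖∑ i, chi (v i) • z i‖) :=
    (measurable_of_countable _).stronglyMeasurable
  rw [h1, ← integral_map (measurable_Phi hε).aemeasurable hsm.aestronglyMeasurable]
  rw [integral_fintype (Integrable.of_finite)]
  have hv : ∀ v : Fin N → Bool, (Measure.map (Phi ε) μ).real {v} = ((2:ℝ)^N)⁻¹ := by
    intro v
    rw [measureReal_def, Measure.map_apply (measurable_Phi hε) (measurableSet_singleton v),
      measure_Phi_fiber hε v]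
    rw [ENNReal.toReal_inv]
    norm_num
  rw [Finset.sum_congr rfl (fun v _ => by rw [hv v])]
  rw [← Finset.smul_sum]
  rw [smul_eq_mul, div_eq_inv_mul]

end Transfer

end CubeTal

namespace CubeTal

open MeasureTheory

section Key
variable {Ω : Type*} [MeasurableSpace Ω] {μ : Measure Ω} [IsProbabilityMeasure μ]
  {N : ℕ} {ε : Fin N → Ω → ℝ}
  {E : Type*} [NormedAddCommGroup E] [NormedSpace ℝ E]

lemma key_tail (hε : IsRademacherFin μ ε) (z : Fin N → E) (t : ℝ) (ht : 0 < t) :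
    μ {ω | 2 * (∫ ω', ‖∑ n, ε n ω' • z n‖ ∂μ) + 3 * (t * l2wFin z) < ‖∑ n, ε n ω • z n‖}
      ≤ ENNReal.ofReal (4 * Real.exp (-t^2/8)) := by
  classical
  rcases eq_or_lt_of_le (l2w_nonneg z) with hσ0 | hσpos
  · -- degenerate case: all z n = 0
    have hz : ∀ n, z n = 0 := l2w_eq_zero hσ0.symm
    have hzero : ∀ ω, (∑ n, ε n ω • z n) = 0 := fun ω => by
      refine Finset.sum_eq_zero fun n _ => by rw [hz n, smul_zero]
    have hfun : (fun ω' => ‖∑ n, ε n ω' • z n‖) = fun _ => (0:ℝ) :=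
      funext fun ω' => by rw [hzero ω', norm_zero]
    have hev : {ω | 2 * (∫ ω', ‖∑ n, ε n ω' • z n‖ ∂μ) + 3 * (t * l2wFin z)
        < ‖∑ n, ε n ω • z n‖} = ∅ := by
      ext ω
      simp only [Set.mem_setOf_eq, Set.mem_empty_iff_false, iff_false, not_lt]
      rw [hzero ω, norm_zero, hfun, integral_const, ← hσ0]
      simp
    rw [hev]
    simp only [measure_empty]
    exact zero_le
  · -- main case
    have hμf := integral_eq_cube hε z
    set f : (Fin N → Bool) → ℝ := fun v => ‖∑ i, chi (v i) • z i‖ with hf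
    set bad : Finset (Fin N → Bool) := Finset.univ.filter (fun v : Fin N → Bool =>
        2 * ((∑ u : Fin N → Bool, ‖∑ i, chi (u i) • z i‖) / 2^N) + 3 * (t * l2wFin z)
          < ‖∑ i, chi (v i) • z i‖) with hbad
    have hcard := cube_tail z t ht hσpos
    rw [← hbad] at hcard
    -- split off the good set
    have hgood := good_ae hε
    rw [ae_iff] at hgood
    have hsub : {ω | 2 * (∫ ω', ‖∑ n, ε n ω' • z n‖ ∂μ) + 3 * (t * l2wFin z)
          < ‖∑ n, ε n ω • z n‖}
        ⊆ (Phi ε ⁻¹' ↑bad) ∪ {a | ¬∀ (n : Fin N), ε n a = chi (Phi ε a n)} := by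
      intro ω hω
      simp only [Set.mem_setOf_eq] at hω
      by_cases hg : ∀ n, ε n ω = chi (Phi ε ω n)
      · left
        have heqs : (∑ n, ε n ω • z n) = ∑ i, chi (Phi ε ω i) • z i :=
          Finset.sum_congr rfl fun n _ => by rw [hg n]
        rw [Set.mem_preimage, Finset.mem_coe, hbad, Finset.mem_filter]
        refine ⟨Finset.mem_univ _, ?_⟩
        rw [← heqs]
        rw [hμf] at hω
        exact hω
      · right
        exact hg
    refine le_trans (measure_mono hsub) ?_
    refine le_trans (measure_union_le _ _) ?_
    rw [hgood, add_zero]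
    -- bound measure of preimage of bad
    have hpre : Phi ε ⁻¹' ↑bad = ⋃ v ∈ bad, Phi ε ⁻¹' {v} :=
      (Set.biUnion_preimage_singleton (Phi ε) ↑bad).symm
    refine le_trans (le_of_eq (congrArg _ hpre)) ?_
    refine le_trans (measure_biUnion_finset_le bad _) ?_
    have hfib : ∀ v ∈ bad, μ (Phi ε ⁻¹' {v}) = ((2:ENNReal)^N)⁻¹ :=
      fun v _ => measure_Phi_fiber hε v
    rw [Finset.sum_congr rfl hfib, Finset.sum_const, nsmul_eq_mul]
    -- now pure ENNReal arithmetic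
    have h2Npos : (0:ℝ) < 2^N := by positivity
    have hENN : ((2:ENNReal)^N)⁻¹ = ENNReal.ofReal (((2:ℝ)^N)⁻¹) := by
      rw [ENNReal.ofReal_inv_of_pos h2Npos]
      congr 1
      rw [ENNReal.ofReal_pow (by norm_num)]
      norm_num
    rw [hENN, ← ENNReal.ofReal_natCast, ← ENNReal.ofReal_mul (by positivity)]
    refine ENNReal.ofReal_le_ofReal ?_
    have hexp : (0:ℝ) < Real.exp (-t^2/8) := Real.exp_pos _
    calc (bad.card : ℝ) * ((2:ℝ)^N)⁻¹
        ≤ (2 * 2^N * Real.exp (-t^2/8)) * ((2:ℝ)^N)⁻¹ := by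
          exact mul_le_mul_of_nonneg_right hcard (by positivity)
      _ = 2 * Real.exp (-t^2/8) := by field_simp
      _ ≤ 4 * Real.exp (-t^2/8) := by nlinarith

end Key

end CubeTal

open CubeTal

theorem stmt12 {Ω : Type*} [MeasurableSpace Ω] (μ : Measure Ω) [IsProbabilityMeasure μ]
    {E : Type*} [NormedAddCommGroup E] [NormedSpace ℝ E] [CompleteSpace E]
    {N : ℕ} (ε : Fin N → Ω → ℝ) (hε : IsRademacherFin μ ε) (x : Fin N → E)
    (t : ℝ) (ht : 0 < t) :
    μ {ω | 2 * (∫ ω', ‖∑ n, ε n ω' • x n‖ ∂μ) + 3 * KwCouple x t <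
        ‖∑ n, ε n ω • x n‖} ≤
      ENNReal.ofReal (4 * Real.exp (-t ^ 2 / 8)) := by

  classical
  set I₁ : ℝ := ∫ ω', ‖∑ n, ε n ω' • x n‖ ∂μ with hI₁
  set K : ℝ := KwCouple x t with hKdef
  set s : ℕ → Set Ω := fun k =>
    {ω | 2 * I₁ + 3 * K + 1/((k:ℝ)+1) ≤ ‖∑ n, ε n ω • x n‖} with hs
  have hEv : {ω | 2 * I₁ + 3 * K < ‖∑ n, ε n ω • x n‖} = ⋃ k, s k := by
    ext ω
    simp only [hs, Set.mem_setOf_eq, Set.mem_iUnion]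
    constructor
    · intro h
      obtain ⟨k, hk⟩ := exists_nat_one_div_lt
        (show (0:ℝ) < ‖∑ n, ε n ω • x n‖ - (2 * I₁ + 3 * K) by linarith)
      exact ⟨k, by push_cast at hk ⊢; linarith⟩
    · rintro ⟨k, hk⟩
      have hpos : (0:ℝ) < 1/((k:ℝ)+1) := by positivity
      linarith
  have hmono : Monotone s := by
    intro k l hkl
    intro ω hω
    simp only [hs, Set.mem_setOf_eq] at hω ⊢
    have : 1/((l:ℝ)+1) ≤ 1/((k:ℝ)+1) := by
      apply one_div_le_one_div_of_le (by positivity)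
      have : (k:ℝ) ≤ l := by exact_mod_cast hkl
      linarith
    linarith
  rw [hEv, (hmono.directed_le).measure_iUnion]
  refine iSup_le fun k => ?_
  -- fixed k
  set η : ℝ := 1/((k:ℝ)+1) with hηdef
  have hη : 0 < η := by positivity
  -- near-optimal decomposition
  have hSne : {r : ℝ | ∃ y z : Fin N → E, (∀ n, x n = y n + z n) ∧
      r = l1wFin y + t * l2wFin z}.Nonempty := by
    refine ⟨l1wFin x + t * l2wFin (fun _ : Fin N => (0:E)), x, fun _ => 0,
      fun n => by simp, rfl⟩
  obtain ⟨r, hrS, hrlt⟩ := Real.lt_sInf_add_pos hSne (show (0:ℝ) < η/6 by linarith)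
  obtain ⟨y, z, hxyz, rfl⟩ := hrS
  have hKlb : l1wFin y + t * l2wFin z - η/6 < K := by
    rw [hKdef]
    unfold KwCouple
    linarith [hrlt]
  set σ : ℝ := l2wFin z with hσdef
  set L : ℝ := l1wFin y with hLdef
  have hL0 : 0 ≤ L := l1w_nonneg y
  set I₂ : ℝ := ∫ ω', ‖∑ n, ε n ω' • z n‖ ∂μ with hI₂
  have hsplit : ∀ ω, (∑ n, ε n ω • x n) = (∑ n, ε n ω • y n) + ∑ n, ε n ω • z n := by
    intro ω
    rw [← Finset.sum_add_distrib]
    exact Finset.sum_congr rfl fun n _ => by rw [hxyz n, smul_add]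
  have hy_ae : ∀ᵐ ω ∂μ, ‖∑ n, ε n ω • y n‖ ≤ L := by
    filter_upwards [good_ae hε] with ω hω
    exact norm_sum_le_l1w y (fun n => ε n ω) (fun n => by show |ε n ω| ≤ 1; rw [hω n, abs_chi])
  have hI₁I₂ : I₂ ≤ I₁ + L := by
    have hmono2 : ∀ᵐ ω ∂μ, ‖∑ n, ε n ω • z n‖ ≤ ‖∑ n, ε n ω • x n‖ + L := by
      filter_upwards [hy_ae] with ω hω
      have : (∑ n, ε n ω • z n) = (∑ n, ε n ω • x n) - ∑ n, ε n ω • y n := by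
        rw [hsplit ω]; abel
      rw [this]
      calc ‖(∑ n, ε n ω • x n) - ∑ n, ε n ω • y n‖
          ≤ ‖∑ n, ε n ω • x n‖ + ‖∑ n, ε n ω • y n‖ := norm_sub_le _ _
        _ ≤ ‖∑ n, ε n ω • x n‖ + L := by linarith
    calc I₂ ≤ ∫ ω, (‖∑ n, ε n ω • x n‖ + L) ∂μ := by
          refine integral_mono_ae (integrable_norm_sum hε z)
            ((integrable_norm_sum hε x).add (integrable_const L)) hmono2
      _ = I₁ + L := by
          rw [integral_add (integrable_norm_sum hε x) (integrable_const L), integral_const]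
          simp [hI₁]
  -- inclusion into the key event
  have hsubset : s k ∩ {ω | ∀ n, ε n ω = chi (Phi ε ω n)}
      ⊆ {ω | 2 * I₂ + 3 * (t * σ) < ‖∑ n, ε n ω • z n‖} := by
    rintro ω ⟨h1, h2⟩
    simp only [hs, Set.mem_setOf_eq] at h1
    simp only [Set.mem_setOf_eq] at h2 ⊢
    have hyb : ‖∑ n, ε n ω • y n‖ ≤ L :=
      norm_sum_le_l1w y (fun n => ε n ω) (fun n => by show |ε n ω| ≤ 1; rw [h2 n, abs_chi])
    have hx : ‖∑ n, ε n ω • x n‖ ≤ L + ‖∑ n, ε n ω • z n‖ := by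
      rw [hsplit ω]
      exact le_trans (norm_add_le _ _) (by linarith)
    linarith
  have hgood := good_ae hε
  rw [ae_iff] at hgood
  have hcover : s k ⊆ (s k ∩ {ω | ∀ n, ε n ω = chi (Phi ε ω n)})
      ∪ {a | ¬∀ (n : Fin N), ε n a = chi (Phi ε a n)} := by
    intro ω hω
    by_cases hg : ∀ n, ε n ω = chi (Phi ε ω n)
    · exact Or.inl ⟨hω, hg⟩
    · exact Or.inr hg
  calc μ (s k) ≤ μ ((s k ∩ {ω | ∀ n, ε n ω = chi (Phi ε ω n)})
        ∪ {a | ¬∀ (n : Fin N), ε n a = chi (Phi ε a n)}) := measure_mono hcover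
    _ ≤ μ (s k ∩ {ω | ∀ n, ε n ω = chi (Phi ε ω n)})
        + μ {a | ¬∀ (n : Fin N), ε n a = chi (Phi ε a n)} := measure_union_le _ _
    _ = μ (s k ∩ {ω | ∀ n, ε n ω = chi (Phi ε ω n)}) := by rw [hgood, add_zero]
    _ ≤ μ {ω | 2 * I₂ + 3 * (t * σ) < ‖∑ n, ε n ω • z n‖} := measure_mono hsubset
    _ ≤ ENNReal.ofReal (4 * Real.exp (-t ^ 2 / 8)) := by
        have := key_tail hε z t ht
        rw [← hI₂, ← hσdef] at this
        exact this
end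
end

section
/- For finitely many elements x₁, …, x_N of ℓ_∞ and every t > 0, K((xₙ)_{n=1}^N, t; ℓ₁^w(ℓ_∞), ℓ₂^w(ℓ_∞)) ≤ 2·K^w_{1,2}((xₙ)_{n=1}^N, t). -/
open scoped ENNReal

/-- The K-functional of the couple `(ℓ₁, ℓ₂)` for a finite scalar sequence. -/
noncomputable def K12Fin {N : ℕ} (a : Fin N → ℝ) (t : ℝ) : ℝ :=
  sInf {r : ℝ | ∃ b c : Fin N → ℝ, (∀ n, a n = b n + c n) ∧
    r = (∑ n, |b n|) + t * (∑ n, (c n) ^ 2) ^ ((1 : ℝ) / 2)}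

/-- The weak K-functional `K^w_{1,2}((xₙ), t) = sup_{‖x*‖ ≤ 1} K₁,₂((x*(xₙ)), t)`. -/
noncomputable def Kw12Fin {E : Type*} [NormedAddCommGroup E] [NormedSpace ℝ E]
    {N : ℕ} (x : Fin N → E) (t : ℝ) : ℝ :=
  ⨆ f : {f : E →L[ℝ] ℝ // ‖f‖ ≤ 1}, K12Fin (fun n => f.1 (x n)) t

namespace Stmt13Aux

/-- Truncation at level `lam`. -/
noncomputable def trunc (lam s : ℝ) : ℝ := max (min s lam) (-lam)

lemma abs_trunc_le_lam {lam : ℝ} (hlam : 0 ≤ lam) (s : ℝ) : |trunc lam s| ≤ lam := by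
  refine abs_le.2 ⟨le_max_right _ _, max_le (min_le_right _ _) (neg_le_self hlam)⟩

lemma abs_trunc_le_abs {lam : ℝ} (hlam : 0 ≤ lam) (s : ℝ) : |trunc lam s| ≤ |s| := by
  refine abs_le.2 ⟨?_, ?_⟩
  · exact (le_min (neg_abs_le s) ((neg_nonpos.2 (abs_nonneg s)).trans hlam)).trans
      (le_max_left _ _)
  · exact max_le ((min_le_left _ _).trans (le_abs_self s))
      ((neg_nonpos.2 hlam).trans (abs_nonneg s))

lemma ptA {lam b c : ℝ} (hlam : 0 < lam) :
    |b + c - trunc lam (b + c)| ≤ |b| + c ^ 2 / (4 * lam) := by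
  have h4 : (0:ℝ) < 4 * lam := by linarith
  have hmain : (|b + c - trunc lam (b + c)| - |b|) * (4 * lam) ≤ c ^ 2 := by
    set s := b + c with hs
    rcases le_total s lam with h1 | h1
    · rcases le_total (-lam) s with h2 | h2
      · have ht : trunc lam s = s := by
          rw [trunc, min_eq_left h1, max_eq_left h2]
        rw [ht]
        simp only [sub_self, abs_zero]
        nlinarith [abs_nonneg b, sq_nonneg c]
      · have ht : trunc lam s = -lam := by
          rw [trunc, min_eq_left h1, max_eq_right h2]
        rw [ht]
        have habs : |s - -lam| = -(s + lam) := by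
          rw [abs_of_nonpos (by linarith)]; ring
        rw [habs]
        nlinarith [sq_nonneg (c + 2 * lam), neg_abs_le b, sq_nonneg c]
    · have ht : trunc lam s = lam := by
        rw [trunc, min_eq_right h1, max_eq_left (by linarith)]
      rw [ht]
      have habs : |s - lam| = s - lam := abs_of_nonneg (by linarith)
      rw [habs]
      nlinarith [sq_nonneg (c - 2 * lam), neg_abs_le b, le_abs_self b, sq_nonneg c]
  have := (le_div_iff₀ h4).2 hmain
  linarith

lemma ptB {lam b c : ℝ} (hlam : 0 ≤ lam) :
    (trunc lam (b + c)) ^ 2 ≤ lam * |b| + |c| * |trunc lam (b + c)| := by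
  set m := |trunc lam (b + c)| with hm
  have h1 : m ≤ lam := abs_trunc_le_lam hlam _
  have h2 : m ≤ |b| + |c| := (abs_trunc_le_abs hlam _).trans (abs_add_le _ _)
  have h0 : 0 ≤ m := abs_nonneg _
  have hsq : (trunc lam (b + c)) ^ 2 = m ^ 2 := (sq_abs _).symm
  nlinarith [abs_nonneg b, abs_nonneg c]

set_option maxHeartbeats 1000000 in
set_option synthInstance.maxHeartbeats 400000 in
/-- The `j`-th coordinate functional on `ℓ∞`. -/
noncomputable def coordCLM (j : ℕ) : lp (fun _ : ℕ => ℝ) ∞ →L[ℝ] ℝ :=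
  LinearMap.mkContinuous
    { toFun := fun u => u j
      map_add' := fun u v => by
        show (u + v : lp (fun _ : ℕ => ℝ) ∞) j = u j + v j
        rw [lp.coeFn_add]; rfl
      map_smul' := fun r u => by
        show (r • u : lp (fun _ : ℕ => ℝ) ∞) j = r • (u j : ℝ)
        rw [lp.coeFn_smul]; rfl }
    1 (fun u => by
      simpa using lp.norm_apply_le_norm ENNReal.top_ne_zero u j)

@[simp] lemma coordCLM_apply (j : ℕ) (u : lp (fun _ : ℕ => ℝ) ∞) :
    coordCLM j u = u j := rfl

lemma norm_coordCLM_le (j : ℕ) : ‖coordCLM j‖ ≤ 1 :=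
  LinearMap.mkContinuous_norm_le _ zero_le_one _

lemma K12Fin_bddBelow {N : ℕ} (a : Fin N → ℝ) (t : ℝ) (ht : 0 ≤ t) :
    BddBelow {r : ℝ | ∃ b c : Fin N → ℝ, (∀ n, a n = b n + c n) ∧
      r = (∑ n, |b n|) + t * (∑ n, (c n) ^ 2) ^ ((1 : ℝ) / 2)} := by
  refine ⟨0, ?_⟩
  rintro r ⟨b, c, hd, rfl⟩
  have h1 : (0:ℝ) ≤ ∑ n, |b n| := Finset.sum_nonneg fun n _ => abs_nonneg _
  have h2 : (0:ℝ) ≤ (∑ n, (c n) ^ 2) ^ ((1 : ℝ) / 2) :=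
    Real.rpow_nonneg (Finset.sum_nonneg fun n _ => sq_nonneg _) _
  positivity

lemma K12Fin_le_sum_abs {N : ℕ} (a : Fin N → ℝ) (t : ℝ) (ht : 0 ≤ t) :
    K12Fin a t ≤ ∑ n, |a n| := by
  apply csInf_le (K12Fin_bddBelow a t ht)
  refine ⟨a, 0, fun n => by simp, ?_⟩
  simp [Real.zero_rpow (by norm_num : (1:ℝ)/2 ≠ 0)]

lemma K12Fin_nonneg {N : ℕ} (a : Fin N → ℝ) (t : ℝ) (ht : 0 ≤ t) :
    0 ≤ K12Fin a t := by
  refine le_csInf ⟨_, a, 0, fun n => by simp, rfl⟩ ?_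
  rintro r ⟨b, c, hd, rfl⟩
  have h1 : (0:ℝ) ≤ ∑ n, |b n| := Finset.sum_nonneg fun n _ => abs_nonneg _
  have h2 : (0:ℝ) ≤ (∑ n, (c n) ^ 2) ^ ((1 : ℝ) / 2) :=
    Real.rpow_nonneg (Finset.sum_nonneg fun n _ => sq_nonneg _) _
  positivity

/-- The key scalar estimate: if `K12Fin a t < S'` then truncation at level `S'/t²`
yields an `ℓ¹` part of size at most `S'` and an `ℓ²` part of size at most `S'/t`. -/
lemma keyScalar {N : ℕ} {t S' : ℝ} (ht : 0 < t) (hS' : 0 < S')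
    (a : Fin N → ℝ) (hK : K12Fin a t < S') :
    (∑ n, |a n - trunc (S' / t ^ 2) (a n)|) ≤ S' ∧
      t * Real.sqrt (∑ n, (trunc (S' / t ^ 2) (a n)) ^ 2) ≤ S' := by
  set lam := S' / t ^ 2 with hlamdef
  have hlam : 0 < lam := by positivity
  have hne : {r : ℝ | ∃ b c : Fin N → ℝ, (∀ n, a n = b n + c n) ∧
      r = (∑ n, |b n|) + t * (∑ n, (c n) ^ 2) ^ ((1 : ℝ) / 2)}.Nonempty :=
    ⟨_, a, 0, fun n => by simp, rfl⟩
  obtain ⟨r, ⟨b, c, hd, hr⟩, hrlt⟩ := exists_lt_of_csInf_lt hne hK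
  set B := ∑ n, |b n| with hB
  set Cs := ∑ n, (c n) ^ 2 with hCs
  have hCs0 : (0:ℝ) ≤ Cs := Finset.sum_nonneg fun n _ => sq_nonneg _
  set σ := Real.sqrt Cs with hσ
  have hσ0 : 0 ≤ σ := Real.sqrt_nonneg _
  have hσ2 : σ ^ 2 = Cs := Real.sq_sqrt hCs0
  have hB0 : 0 ≤ B := Finset.sum_nonneg fun n _ => abs_nonneg _
  have hBC : B + t * σ < S' := by
    have : r = B + t * σ := by
      rw [hr, hσ, Real.sqrt_eq_rpow]
    linarith [this ▸ hrlt]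
  constructor
  · calc (∑ n, |a n - trunc lam (a n)|)
        ≤ ∑ n, (|b n| + (c n) ^ 2 / (4 * lam)) := by
          refine Finset.sum_le_sum fun n _ => ?_
          rw [hd n]; exact ptA hlam
      _ = B + Cs / (4 * lam) := by
          rw [Finset.sum_add_distrib, ← Finset.sum_div]
      _ ≤ B + t * σ := by
          have ht2 : t ^ 2 * lam = S' := by rw [hlamdef]; field_simp
          have hσle : σ ≤ t * lam := by
            refine le_of_mul_le_mul_left ?_ ht
            nlinarith
          have hCsle : Cs ≤ (t * σ) * (4 * lam) := by
            nlinarith [mul_le_mul_of_nonneg_left hσle hσ0,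
              mul_nonneg (mul_nonneg ht.le hσ0) hlam.le]
          have hCsval : Cs / (4 * lam) ≤ t * σ := (div_le_iff₀ (by positivity)).2 hCsle
          linarith
      _ ≤ S' := hBC.le
  · set G := ∑ n, (trunc lam (a n)) ^ 2 with hG
    have hG0 : (0:ℝ) ≤ G := Finset.sum_nonneg fun n _ => sq_nonneg _
    set F := Real.sqrt G with hF
    have hF0 : 0 ≤ F := Real.sqrt_nonneg _
    have hF2 : F ^ 2 = G := Real.sq_sqrt hG0
    have step1 : G ≤ lam * B + ∑ n, |c n| * |trunc lam (a n)| := by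
      calc G ≤ ∑ n, (lam * |b n| + |c n| * |trunc lam (a n)|) := by
              refine Finset.sum_le_sum fun n _ => ?_
              rw [hd n] at *; exact ptB hlam.le
        _ = lam * B + ∑ n, |c n| * |trunc lam (a n)| := by
              rw [Finset.sum_add_distrib, Finset.mul_sum]
    have step2 : ∑ n, |c n| * |trunc lam (a n)| ≤ σ * F := by
      have := Real.sum_mul_le_sqrt_mul_sqrt Finset.univ
        (fun n => |c n|) (fun n => |trunc lam (a n)|)
      simpa [sq_abs, ← hCs, ← hG, ← hσ, ← hF] using this
    have step3 : G ≤ lam * B + σ * F := by linarith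
    have ht2 : t ^ 2 * lam = S' := by rw [hlamdef]; field_simp
    have hX2 : (t * F) ^ 2 ≤ S' * B + (t * σ) * (t * F) := by
      calc (t * F) ^ 2 = t ^ 2 * G := by rw [← hF2]; ring
        _ ≤ t ^ 2 * (lam * B + σ * F) := mul_le_mul_of_nonneg_left step3 (sq_nonneg t)
        _ = (t ^ 2 * lam) * B + (t * σ) * (t * F) := by ring
        _ = S' * B + (t * σ) * (t * F) := by rw [ht2]
    by_contra hcon
    push_neg at hcon
    have hX0 : 0 < t * F := hS'.trans hcon
    nlinarith [mul_nonneg (sub_nonneg.2 hcon.le) hB0,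
      mul_pos hX0 (by linarith : (0:ℝ) < S' - (B + t * σ)),
      mul_lt_mul_of_pos_right hcon hX0]

end Stmt13Aux

set_option maxHeartbeats 2000000 in
set_option synthInstance.maxHeartbeats 400000 in
open Stmt13Aux in
theorem stmt13 {N : ℕ} (x : Fin N → lp (fun _ : ℕ => ℝ) ∞) (t : ℝ) (ht : 0 < t) :
    KwCouple x t ≤ 2 * Kw12Fin x t := by
  haveI : Nonempty {f : lp (fun _ : ℕ => ℝ) ∞ →L[ℝ] ℝ // ‖f‖ ≤ 1} :=
    ⟨⟨0, by simp⟩⟩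
  set S := Kw12Fin x t with hSdef
  have hBdd : BddAbove (Set.range fun f : {f : lp (fun _ : ℕ => ℝ) ∞ →L[ℝ] ℝ // ‖f‖ ≤ 1} =>
      K12Fin (fun n => f.1 (x n)) t) := by
    refine ⟨∑ n, ‖x n‖, ?_⟩
    rintro _ ⟨f, rfl⟩
    refine (K12Fin_le_sum_abs _ t ht.le).trans ?_
    refine Finset.sum_le_sum fun n _ => ?_
    calc |f.1 (x n)| = ‖f.1 (x n)‖ := rfl
      _ ≤ ‖f.1‖ * ‖x n‖ := f.1.le_opNorm _
      _ ≤ 1 * ‖x n‖ := mul_le_mul_of_nonneg_right f.2 (norm_nonneg _)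
      _ = ‖x n‖ := one_mul _
  have hS0 : 0 ≤ S := by
    refine Real.iSup_nonneg fun f => K12Fin_nonneg _ t ht.le
  have hSle : ∀ j : ℕ, K12Fin (fun n => (x n : ℕ → ℝ) j) t ≤ S := by
    intro j
    have := le_ciSup hBdd (⟨coordCLM j, norm_coordCLM_le j⟩ :
      {f : lp (fun _ : ℕ => ℝ) ∞ →L[ℝ] ℝ // ‖f‖ ≤ 1})
    exact this
  have key : ∀ ε : ℝ, 0 < ε → KwCouple x t ≤ 2 * S + ε := by
    intro ε hε
    set S' := S + ε / 2 with hS'def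
    have hS' : 0 < S' := by positivity
    set lam := S' / t ^ 2 with hlamdef
    have hlam : 0 < lam := by positivity
    have hmem : ∀ n : Fin N, Memℓp (fun j => trunc lam ((x n : ℕ → ℝ) j)) (∞ : ℝ≥0∞) := by
      intro n
      apply memℓp_infty
      refine ⟨lam, ?_⟩
      rintro _ ⟨j, rfl⟩
      simpa [Real.norm_eq_abs] using abs_trunc_le_lam hlam.le ((x n : ℕ → ℝ) j)
    set z : Fin N → lp (fun _ : ℕ => ℝ) ∞ :=
      fun n => ⟨fun j => trunc lam ((x n : ℕ → ℝ) j), hmem n⟩ with hzdef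
    set y : Fin N → lp (fun _ : ℕ => ℝ) ∞ := fun n => x n - z n with hydef
    have hzj : ∀ (n : Fin N) (j : ℕ), (z n : ℕ → ℝ) j = trunc lam ((x n : ℕ → ℝ) j) :=
      fun n j => rfl
    have hyj : ∀ (n : Fin N) (j : ℕ),
        (y n : ℕ → ℝ) j = (x n : ℕ → ℝ) j - trunc lam ((x n : ℕ → ℝ) j) := by
      intro n j
      show ((x n - z n : lp (fun _ : ℕ => ℝ) ∞) : ℕ → ℝ) j = _
      rw [lp.coeFn_sub, Pi.sub_apply, hzj]
    -- the two per-coordinate bounds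
    have keyj : ∀ j : ℕ,
        (∑ n, |(x n : ℕ → ℝ) j - trunc lam ((x n : ℕ → ℝ) j)|) ≤ S' ∧
          t * Real.sqrt (∑ n, (trunc lam ((x n : ℕ → ℝ) j)) ^ 2) ≤ S' := by
      intro j
      have hKj : K12Fin (fun n => (x n : ℕ → ℝ) j) t < S' :=
        lt_of_le_of_lt (hSle j) (by rw [hS'def]; linarith)
      exact keyScalar ht hS' _ hKj
    -- bound on l1wFin y
    have hl1 : l1wFin y ≤ S' := by
      refine ciSup_le fun f => ?_
      set s : Fin N → ℝ := fun n => if 0 ≤ f.1 (y n) then 1 else -1 with hsdef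
      have habs : ∀ n, |f.1 (y n)| = s n * f.1 (y n) := by
        intro n
        by_cases h : 0 ≤ f.1 (y n)
        · simp [hsdef, h, abs_of_nonneg h]
        · simp [hsdef, h, abs_of_neg (lt_of_not_ge h)]
      set u : lp (fun _ : ℕ => ℝ) ∞ := ∑ n, s n • y n with hudef
      have hfu : f.1 u = ∑ n, s n * f.1 (y n) := by
        rw [hudef, map_sum]
        simp [smul_eq_mul]
      have huj : ∀ j : ℕ, (u : ℕ → ℝ) j = ∑ n, s n * (y n : ℕ → ℝ) j := by
        intro j
        have h1 : coordCLM j u = ∑ n, s n * (y n : ℕ → ℝ) j := by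
          rw [hudef, map_sum]
          simp [smul_eq_mul]
        simpa using h1
      have hujle : ∀ j : ℕ, ‖(u : ℕ → ℝ) j‖ ≤ S' := by
        intro j
        rw [huj j, Real.norm_eq_abs]
        calc |∑ n, s n * (y n : ℕ → ℝ) j| ≤ ∑ n, |s n * (y n : ℕ → ℝ) j| :=
              Finset.abs_sum_le_sum_abs _ _
          _ = ∑ n, |(y n : ℕ → ℝ) j| := by
              refine Finset.sum_congr rfl fun n _ => ?_
              rw [abs_mul]
              have : |s n| = 1 := by
                by_cases h : 0 ≤ f.1 (y n) <;> simp [hsdef, h]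
              rw [this, one_mul]
          _ ≤ S' := by
              have := (keyj j).1
              calc ∑ n, |(y n : ℕ → ℝ) j|
                  = ∑ n, |(x n : ℕ → ℝ) j - trunc lam ((x n : ℕ → ℝ) j)| := by
                    refine Finset.sum_congr rfl fun n _ => by rw [hyj]
                _ ≤ S' := this
      have hnormu : ‖u‖ ≤ S' := lp.norm_le_of_forall_le hS'.le hujle
      calc ∑ n, |f.1 (y n)| = f.1 u := by rw [hfu]; exact Finset.sum_congr rfl fun n _ => habs n
        _ ≤ |f.1 u| := le_abs_self _
        _ ≤ ‖f.1‖ * ‖u‖ := f.1.le_opNorm u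
        _ ≤ 1 * S' := mul_le_mul f.2 hnormu (norm_nonneg _) zero_le_one
        _ = S' := one_mul _
    -- bound on l2wFin z
    have hl2 : l2wFin z ≤ S' / t := by
      refine ciSup_le fun f => ?_
      set Q := ∑ n, (f.1 (z n)) ^ 2 with hQdef
      have hQ0 : (0:ℝ) ≤ Q := Finset.sum_nonneg fun n _ => sq_nonneg _
      have hgoal : Q ^ ((1:ℝ)/2) = Real.sqrt Q := (Real.sqrt_eq_rpow Q).symm
      rw [hgoal]
      set v : lp (fun _ : ℕ => ℝ) ∞ := ∑ n, f.1 (z n) • z n with hvdef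
      have hfv : f.1 v = Q := by
        rw [hvdef, map_sum, hQdef]
        refine Finset.sum_congr rfl fun n _ => by rw [map_smul, smul_eq_mul, sq]
      have hvj : ∀ j : ℕ, ‖(v : ℕ → ℝ) j‖ ≤ Real.sqrt Q * (S' / t) := by
        intro j
        have h1 : (v : ℕ → ℝ) j = ∑ n, f.1 (z n) * (z n : ℕ → ℝ) j := by
          have h2 : coordCLM j v = ∑ n, f.1 (z n) * (z n : ℕ → ℝ) j := by
            rw [hvdef, map_sum]
            simp [smul_eq_mul]
          simpa using h2
        rw [h1, Real.norm_eq_abs]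
        have hCS : |∑ n, f.1 (z n) * (z n : ℕ → ℝ) j|
            ≤ Real.sqrt (∑ n, (f.1 (z n)) ^ 2) * Real.sqrt (∑ n, ((z n : ℕ → ℝ) j) ^ 2) := by
          calc |∑ n, f.1 (z n) * (z n : ℕ → ℝ) j|
              ≤ ∑ n, |f.1 (z n) * (z n : ℕ → ℝ) j| := Finset.abs_sum_le_sum_abs _ _
            _ = ∑ n, |f.1 (z n)| * |(z n : ℕ → ℝ) j| := by
                refine Finset.sum_congr rfl fun n _ => abs_mul _ _
            _ ≤ Real.sqrt (∑ n, |f.1 (z n)| ^ 2) * Real.sqrt (∑ n, |(z n : ℕ → ℝ) j| ^ 2) :=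
                Real.sum_mul_le_sqrt_mul_sqrt _ _ _
            _ = Real.sqrt (∑ n, (f.1 (z n)) ^ 2) * Real.sqrt (∑ n, ((z n : ℕ → ℝ) j) ^ 2) := by
                simp [sq_abs]
        refine hCS.trans ?_
        have hzsqrt : Real.sqrt (∑ n, ((z n : ℕ → ℝ) j) ^ 2) ≤ S' / t := by
          have h3 := (keyj j).2
          have h4 : (∑ n, ((z n : ℕ → ℝ) j) ^ 2) = ∑ n, (trunc lam ((x n : ℕ → ℝ) j)) ^ 2 := by
            refine Finset.sum_congr rfl fun n _ => by rw [hzj]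
          rw [h4, le_div_iff₀ ht, mul_comm]
          exact h3
        exact mul_le_mul_of_nonneg_left hzsqrt (Real.sqrt_nonneg _)
      have hnormv : ‖v‖ ≤ Real.sqrt Q * (S' / t) :=
        lp.norm_le_of_forall_le (by positivity) hvj
      have hQle : Q ≤ Real.sqrt Q * (S' / t) := by
        calc Q = f.1 v := hfv.symm
          _ ≤ |f.1 v| := le_abs_self _
          _ ≤ ‖f.1‖ * ‖v‖ := f.1.le_opNorm v
          _ ≤ 1 * (Real.sqrt Q * (S' / t)) :=
              mul_le_mul f.2 hnormv (norm_nonneg _) zero_le_one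
          _ = Real.sqrt Q * (S' / t) := one_mul _
      by_contra hcon
      push_neg at hcon
      have hsq : Real.sqrt Q ^ 2 = Q := Real.sq_sqrt hQ0
      have hQpos : 0 < Real.sqrt Q := lt_of_le_of_lt (by positivity) hcon
      nlinarith [mul_lt_mul_of_pos_left hcon hQpos]
    -- conclude
    have hmemInf : l1wFin y + t * l2wFin z ∈
        {r : ℝ | ∃ y' z' : Fin N → lp (fun _ : ℕ => ℝ) ∞,
          (∀ n, x n = y' n + z' n) ∧ r = l1wFin y' + t * l2wFin z'} := by
      refine ⟨y, z, fun n => ?_, rfl⟩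
      rw [hydef]
      simp
    have hbdd : BddBelow {r : ℝ | ∃ y' z' : Fin N → lp (fun _ : ℕ => ℝ) ∞,
        (∀ n, x n = y' n + z' n) ∧ r = l1wFin y' + t * l2wFin z'} := by
      refine ⟨0, ?_⟩
      rintro r ⟨y', z', hd, rfl⟩
      have h1 : 0 ≤ l1wFin y' := Real.iSup_nonneg fun f =>
        Finset.sum_nonneg fun n _ => abs_nonneg _
      have h2 : 0 ≤ l2wFin z' := Real.iSup_nonneg fun f =>
        Real.rpow_nonneg (Finset.sum_nonneg fun n _ => sq_nonneg _) _
      positivity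
    have hfinal : KwCouple x t ≤ l1wFin y + t * l2wFin z := csInf_le hbdd hmemInf
    have ht' : t * (S' / t) = S' := by field_simp
    calc KwCouple x t ≤ l1wFin y + t * l2wFin z := hfinal
      _ ≤ S' + t * (S' / t) :=
          add_le_add hl1 (mul_le_mul_of_nonneg_left hl2 ht.le)
      _ = 2 * S + ε := by rw [ht']; rw [hS'def]; ring
  exact le_of_forall_pos_le_add key
end
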